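/- The Smith–Kidger Type 1 space together with the 14 point-evaluation functionals at the eight vertices (±1,±1,±1) and six face-centroids (±1,0,0),(0,±1,0),(0,0,±1) of [−1,1]³ is unisolvent: any polynomial in the Type 1 space vanishing at all 14 points is identically zero. -/

import Mathlib

open MvPolynomial

noncomputable def SK1 : Submodule ℝ (MvPolynomial (Fin 3) ℝ) :=
  MvPolynomial.restrictTotalDegree (Fin 3) ℝ 2 ⊔
    Submodule.span ℝ {X 0 * X 1 * X 2, X 0 ^ 2 * X 1, X 1 ^ 2 * X 2, X 2 ^ 2 * X 0}

lemma fin3_decomp (v : Fin 3 →₀ ℕ) :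
    v = Finsupp.single 0 (v 0) + Finsupp.single 1 (v 1) + Finsupp.single 2 (v 2) := by
  ext i; fin_cases i <;> simp [Finsupp.single_apply]

lemma monomial_eq_prod (v : Fin 3 →₀ ℕ) :
    (monomial v (1:ℝ)) = X 0 ^ v 0 * X 1 ^ v 1 * X 2 ^ v 2 := by
  rw [X_pow_eq_monomial, X_pow_eq_monomial, X_pow_eq_monomial, monomial_mul, monomial_mul,
    one_mul, one_mul, ← fin3_decomp v]

def S14 : Set (MvPolynomial (Fin 3) ℝ) :=
  {1, X 0, X 1, X 2, X 0^2, X 1^2, X 2^2, X 0 * X 1, X 0 * X 2, X 1 * X 2,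
   X 0 * X 1 * X 2, X 0 ^ 2 * X 1, X 1 ^ 2 * X 2, X 2 ^ 2 * X 0}

lemma sk1_le : SK1 ≤ Submodule.span ℝ S14 := by
  apply sup_le
  · intro q hq
    rw [MvPolynomial.mem_restrictTotalDegree] at hq
    rw [q.as_sum]
    apply Submodule.sum_mem
    intro v hv
    have hd : v.sum (fun _ e => e) ≤ 2 := le_trans (MvPolynomial.le_totalDegree hv) hq
    have hd2 : v 0 + v 1 + v 2 ≤ 2 := by
      rw [Finsupp.sum_fintype _ _ (fun _ => rfl), Fin.sum_univ_three] at hd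
      exact hd
    rw [show monomial v (coeff v q) = coeff v q • monomial v 1 by
      rw [MvPolynomial.smul_monomial, smul_eq_mul, mul_one]]
    apply Submodule.smul_mem
    rw [monomial_eq_prod]
    have h0 : v 0 ≤ 2 := by omega
    have h1 : v 1 ≤ 2 := by omega
    have h2 : v 2 ≤ 2 := by omega
    interval_cases h : v 0 <;> interval_cases h1 : v 1 <;> interval_cases h2 : v 2 <;>
      first
      | omega
      | (apply Submodule.subset_span
         simp only [S14, Set.mem_insert_iff, Set.mem_singleton_iff]
         ring_nf
         tauto)
  · apply Submodule.span_mono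
    intro x hx
    simp only [Set.mem_insert_iff, Set.mem_singleton_iff, S14] at *
    rcases hx with h | h | h | h <;> subst h <;> simp only [true_or, or_true]

theorem stmt7 (p : MvPolynomial (Fin 3) ℝ) (hp : p ∈ SK1)
    (hV : ∀ j k l : ℝ, (j = 1 ∨ j = -1) → (k = 1 ∨ k = -1) → (l = 1 ∨ l = -1) →
      eval ![j, k, l] p = 0)
    (hM : ∀ s : ℝ, (s = 1 ∨ s = -1) →
      eval ![s, 0, 0] p = 0 ∧ eval ![0, s, 0] p = 0 ∧ eval ![0, 0, s] p = 0) :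
    p = 0 := by
  have hp14 : p ∈ Submodule.span ℝ S14 := sk1_le hp
  rw [S14] at hp14
  simp only [Submodule.mem_span_insert, Submodule.mem_span_singleton] at hp14
  obtain ⟨c1, _, ⟨c2, _, ⟨c3, _, ⟨c4, _, ⟨c5, _, ⟨c6, _, ⟨c7, _, ⟨c8, _, ⟨c9, _, ⟨c10, _,
    ⟨c11, _, ⟨c12, _, ⟨c13, _, ⟨c14, h14⟩, h13⟩, h12⟩, h11⟩, h10⟩, h9⟩, h8⟩, h7⟩, h6⟩,
    h5⟩, h4⟩, h3⟩, h2⟩, h1⟩ := hp14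
  subst h14 h13 h12 h11 h10 h9 h8 h7 h6 h5 h4 h3 h2 h1
  simp only [smul_eval, smul_eq_mul, eval_add, eval_mul, eval_pow, eval_X, map_one,
    Matrix.cons_val_zero, Matrix.cons_val_one, Matrix.head_cons, Matrix.cons_val_two,
    Matrix.tail_cons] at hV hM
  obtain ⟨m1, m2, m3⟩ := hM 1 (Or.inl rfl)
  obtain ⟨m4, m5, m6⟩ := hM (-1) (Or.inr rfl)
  have v1 := hV 1 1 1 (Or.inl rfl) (Or.inl rfl) (Or.inl rfl)
  have v2 := hV 1 1 (-1) (Or.inl rfl) (Or.inl rfl) (Or.inr rfl)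
  have v3 := hV 1 (-1) 1 (Or.inl rfl) (Or.inr rfl) (Or.inl rfl)
  have v4 := hV 1 (-1) (-1) (Or.inl rfl) (Or.inr rfl) (Or.inr rfl)
  have v5 := hV (-1) 1 1 (Or.inr rfl) (Or.inl rfl) (Or.inl rfl)
  have v6 := hV (-1) 1 (-1) (Or.inr rfl) (Or.inl rfl) (Or.inr rfl)
  have v7 := hV (-1) (-1) 1 (Or.inr rfl) (Or.inr rfl) (Or.inl rfl)
  have v8 := hV (-1) (-1) (-1) (Or.inr rfl) (Or.inr rfl) (Or.inr rfl)
  ring_nf at v1 v2 v3 v4 v5 v6 v7 v8 m1 m2 m3 m4 m5 m6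
  have e1 : c1 = 0 := by linarith
  have e2 : c2 = 0 := by linarith
  have e3 : c3 = 0 := by linarith
  have e4 : c4 = 0 := by linarith
  have e5 : c5 = 0 := by linarith
  have e6 : c6 = 0 := by linarith
  have e7 : c7 = 0 := by linarith
  have e8 : c8 = 0 := by linarith
  have e9 : c9 = 0 := by linarith
  have e10 : c10 = 0 := by linarith
  have e11 : c11 = 0 := by linarith
  have e12 : c12 = 0 := by linarith
  have e13 : c13 = 0 := by linarith
  have e14 : c14 = 0 := by linarith
  rw [e1, e2, e3, e4, e5, e6, e7, e8, e9, e10, e11, e12, e13, e14]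
  simp
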